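/- Let u be the mean exit time of the derivative-free dynamics from (a,b) starting at m ∈ (a,b): u(m) = κ[((m−a)/(b−a)) ∫_a^b ∫_a^y e^{−F(z)/ε} dz dy − ∫_a^m ∫_a^y e^{−F(z)/ε} dz dy], with κ = |b−a|/(ε Z_G) and Z_G = ∫_a^b e^{−F/ε} dz. If F is bounded, F_min ≤ F ≤ F_max, then u(m) ≤ ((b−m)(m−a)/ε) e^{(F_max − F_min)/ε}. -/

import Mathlib

open MeasureTheory Real intervalIntegral

/-- Upper bound on the mean exit time of the derivative-free dynamics: with
`κ = (b−a)/(ε Z_G)`, `Z_G = ∫_a^b e^{−F/ε}`, and `F_min ≤ F ≤ F_max`,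
`u(m) ≤ ((b−m)(m−a)/ε) e^{(F_max − F_min)/ε}`. -/
theorem stmt18 (a b m ε Fmin Fmax : ℝ) (ham : a < m) (hmb : m < b) (hε : 0 < ε)
    (F : ℝ → ℝ) (hF : Measurable F)
    (hbounds : ∀ z ∈ Set.Icc a b, Fmin ≤ F z ∧ F z ≤ Fmax)
    (ZG κ : ℝ)
    (hZG : ZG = ∫ z in a..b, Real.exp (-F z / ε))
    (hκ : κ = (b - a) / (ε * ZG))
    (u : ℝ → ℝ)
    (hu : u m = κ * (((m - a) / (b - a)) *
          (∫ y in a..b, ∫ z in a..y, Real.exp (-F z / ε)) -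
        ∫ y in a..m, ∫ z in a..y, Real.exp (-F z / ε))) :
    u m ≤ (b - m) * (m - a) / ε * Real.exp ((Fmax - Fmin) / ε) := by
  set f : ℝ → ℝ := fun z => Real.exp (-F z / ε) with hf
  set M : ℝ := Real.exp (-Fmin / ε) with hM
  set E : ℝ := Real.exp (-Fmax / ε) with hE
  have hab : a < b := ham.trans hmb
  have hfm : Measurable f := ((Measurable.neg hF).div_const ε).exp
  have hfpos : ∀ z, 0 < f z := fun z => Real.exp_pos _
  have hMpos : 0 < M := Real.exp_pos _
  have hEpos : 0 < E := Real.exp_pos _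
  have hfle : ∀ z ∈ Set.Icc a b, f z ≤ M := fun z hz =>
    Real.exp_le_exp.mpr ((div_le_div_iff_of_pos_right hε).mpr (by linarith [(hbounds z hz).1]))
  have hfge : ∀ z ∈ Set.Icc a b, E ≤ f z := fun z hz =>
    Real.exp_le_exp.mpr ((div_le_div_iff_of_pos_right hε).mpr (by linarith [(hbounds z hz).2]))
  -- integrability of f on subintervals of [a,b]
  have hfint : ∀ c d : ℝ, a ≤ c → c ≤ d → d ≤ b → IntervalIntegrable f volume c d := by
    intro c d hac hcd hdb
    have hIcc : IntegrableOn f (Set.Icc c d) := by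
      apply Integrable.mono' (integrable_const M) hfm.aestronglyMeasurable.restrict
      filter_upwards [ae_restrict_mem measurableSet_Icc] with z hz
      rw [Real.norm_of_nonneg (hfpos z).le]
      exact hfle z ⟨hac.trans hz.1, hz.2.trans hdb⟩
    rw [show Set.Icc c d = Set.uIcc c d from (Set.uIcc_of_le hcd).symm] at hIcc
    exact hIcc.intervalIntegrable
  set g : ℝ → ℝ := fun y => ∫ z in a..y, f z with hg
  have hgcont : ContinuousOn g (Set.uIcc a b) := by
    apply intervalIntegral.continuousOn_primitive_interval
    rw [Set.uIcc_of_le hab.le]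
    apply Integrable.mono' (integrable_const M) hfm.aestronglyMeasurable.restrict
    filter_upwards [ae_restrict_mem measurableSet_Icc] with z hz
    rw [Real.norm_of_nonneg (hfpos z).le]
    exact hfle z hz
  have hgint : ∀ c d : ℝ, a ≤ c → c ≤ d → d ≤ b → IntervalIntegrable g volume c d := by
    intro c d hac hcd hdb
    refine (hgcont.mono ?_).intervalIntegrable
    rw [Set.uIcc_of_le hcd, Set.uIcc_of_le hab.le]
    exact Set.Icc_subset_Icc hac hdb
  have hgnonneg : ∀ y, a ≤ y → 0 ≤ g y := fun y h =>
    intervalIntegral.integral_nonneg h (fun z _ => (hfpos z).le)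
  -- g y ≤ (b-a)*M for y in [m,b]
  have hgle : ∀ y ∈ Set.Icc m b, g y ≤ (b - a) * M := by
    intro y hy
    have hay : a ≤ y := ham.le.trans hy.1
    have h1 : g y ≤ ∫ _ in a..y, M := by
      apply intervalIntegral.integral_mono_on hay (hfint a y le_rfl hay hy.2)
        intervalIntegrable_const
      intro z hz
      exact hfle z ⟨hz.1, hz.2.trans hy.2⟩
    rw [intervalIntegral.integral_const, smul_eq_mul] at h1
    refine h1.trans ?_
    have := hy.2
    nlinarith
  -- pieces
  set I1 : ℝ := ∫ y in a..m, g y with hI1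
  set I2 : ℝ := ∫ y in m..b, g y with hI2
  have hsplit : (∫ y in a..b, g y) = I1 + I2 :=
    (intervalIntegral.integral_add_adjacent_intervals
      (hgint a m le_rfl ham.le hmb.le) (hgint m b ham.le hmb.le le_rfl)).symm
  have hI1nonneg : 0 ≤ I1 :=
    intervalIntegral.integral_nonneg ham.le (fun y hy => hgnonneg y hy.1)
  have hI2le : I2 ≤ (b - m) * ((b - a) * M) := by
    have h1 : I2 ≤ ∫ _ in m..b, (b - a) * M :=
      intervalIntegral.integral_mono_on hmb.le (hgint m b ham.le hmb.le le_rfl)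
        intervalIntegrable_const hgle
    rwa [intervalIntegral.integral_const, smul_eq_mul] at h1
  -- ZG lower bound
  have hZGge : (b - a) * E ≤ ZG := by
    have h1 : (∫ _ in a..b, E) ≤ ∫ z in a..b, f z :=
      intervalIntegral.integral_mono_on hab.le intervalIntegrable_const
        (hfint a b le_rfl hab.le le_rfl) hfge
    rw [intervalIntegral.integral_const, smul_eq_mul] at h1
    rw [hZG]; exact h1
  have hZGpos : 0 < ZG := lt_of_lt_of_le (mul_pos (by linarith) hEpos) hZGge
  have hκpos : 0 ≤ κ := by
    rw [hκ]; exact div_nonneg (by linarith) (by positivity)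
  have hκle : κ ≤ 1 / (ε * E) := by
    rw [hκ]
    rw [div_le_div_iff₀ (by positivity) (by positivity)]
    nlinarith
  -- rewrite u m
  have hum : u m = κ * (((m - a) / (b - a)) * (I1 + I2) - I1) := by
    rw [hu, hsplit]
  have hba : (0:ℝ) < b - a := by linarith
  have hstep : ((m - a) / (b - a)) * (I1 + I2) - I1 ≤ (m - a) * (b - m) * M := by
    have hr1 : (m - a) / (b - a) ≤ 1 := by
      rw [div_le_one hba]; linarith
    have hr0 : 0 ≤ (m - a) / (b - a) := div_nonneg (by linarith) (by linarith)
    have h2 : ((m - a) / (b - a)) * I2 ≤ ((m - a) / (b - a)) * ((b - m) * ((b - a) * M)) := by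
      apply mul_le_mul_of_nonneg_left hI2le hr0
    have h3 : ((m - a) / (b - a)) * ((b - m) * ((b - a) * M)) = (m - a) * (b - m) * M := by
      field_simp
    nlinarith [mul_le_mul_of_nonneg_right hr1 hI1nonneg]
  have humle : u m ≤ κ * ((m - a) * (b - m) * M) := by
    rw [hum]
    exact mul_le_mul_of_nonneg_left hstep hκpos
  refine humle.trans ?_
  have hεne : ε ≠ 0 := hε.ne'
  have hEne : E ≠ 0 := hEpos.ne'
  have hexp : Real.exp ((Fmax - Fmin) / ε) = M / E := by
    rw [hM, hE, ← Real.exp_sub]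
    congr 1
    field_simp
    ring
  rw [hexp]
  have h4 : κ * ((m - a) * (b - m) * M) ≤ (1 / (ε * E)) * ((m - a) * (b - m) * M) := by
    apply mul_le_mul_of_nonneg_right hκle (mul_nonneg (mul_nonneg (by linarith) (by linarith)) hMpos.le)
  refine h4.trans (le_of_eq ?_)
  field_simp
  try simp
  try tauto
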